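/- arXiv:math/0402011 — 4 statements merged into one kernel-verified Lean document; each statement's English description precedes it below -/
import Mathlib

section
/- Let 1/2 < α < 1 and 0 ≤ κ < α − 1/2. Then ∫_{ℝ²} A_{2,κ}(ω^α_+(x)) dx < ∞; that is, ω^α_+ belongs to the Zygmund space L²(log L)^κ(ℝ²). -/
open MeasureTheory Real Metric Filter
open scoped ENNReal Topology

/-- The plane `ℝ²` with the Euclidean norm. -/
noncomputable abbrev E2 : Type := EuclideanSpace ℝ (Fin 2)

/-- The vorticity `ω^α_+`, equal to `1/(|x| |log|x||^α)` on the upper half-disk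
`B⁺(0;1/3)` and zero elsewhere. -/
noncomputable def omegaPlus (α : ℝ) (x : E2) : ℝ :=
  if ‖x‖ < 1/3 ∧ 0 < x 1 then 1 / (‖x‖ * |Real.log ‖x‖| ^ α) else 0

/-- The Young function `A_{p,a}(s) = (s (log(2+s))^a)^p`. -/
noncomputable def Apa (p a s : ℝ) : ℝ := (s * Real.log (2 + s) ^ a) ^ p

/-- Polar-type formula for lower integrals of radial functions on `E2`. -/
lemma lintegral_fun_norm_E2 (f : ℝ → ℝ≥0∞) (hf : Measurable f) :
    ∫⁻ x : E2, f ‖x‖ =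
      (volume : Measure E2).toSphere Set.univ * ∫⁻ y in Set.Ioi (0:ℝ), ENNReal.ofReal y * f y := by
  have hdim : Module.finrank ℝ E2 = 2 := finrank_euclideanSpace_fin
  have hm1 : Measurable fun p : Metric.sphere (0:E2) 1 × Set.Ioi (0:ℝ) => f p.2 :=
    hf.comp (measurable_subtype_coe.comp measurable_snd)
  have hm2 : Measurable fun y : Set.Ioi (0:ℝ) => f y :=
    hf.comp measurable_subtype_coe
  calc ∫⁻ x : E2, f ‖x‖
      = ∫⁻ x : ({(0:E2)}ᶜ : Set E2), f ‖x.1‖ ∂((volume : Measure E2).comap (↑)) := by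
        rw [lintegral_subtype_comap (measurableSet_singleton _).compl (fun x => f ‖x‖),
          restrict_compl_singleton]
    _ = ∫⁻ p : Metric.sphere (0:E2) 1 × Set.Ioi (0:ℝ), f p.2
          ∂(((volume : Measure E2).toSphere).prod
             (Measure.volumeIoiPow (Module.finrank ℝ E2 - 1))) := by
        rw [← (volume : Measure E2).measurePreserving_homeomorphUnitSphereProd.lintegral_comp
          (f := fun p : Metric.sphere (0:E2) 1 × Set.Ioi (0:ℝ) => f p.2) hm1]
        simp
    _ = (volume : Measure E2).toSphere Set.univ *
          ∫⁻ y : Set.Ioi (0:ℝ), f y ∂(Measure.volumeIoiPow (Module.finrank ℝ E2 - 1)) := by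
        rw [lintegral_prod (fun p : Metric.sphere (0:E2) 1 × Set.Ioi (0:ℝ) => f p.2)
          hm1.aemeasurable]
        simp [lintegral_const, mul_comm]
    _ = (volume : Measure E2).toSphere Set.univ *
          ∫⁻ y in Set.Ioi (0:ℝ), ENNReal.ofReal y * f y := by
        rw [hdim]
        congr 1
        rw [Measure.volumeIoiPow,
          lintegral_withDensity_eq_lintegral_mul _
            ((measurable_subtype_coe.pow_const _).ennreal_ofReal) hm2]
        rw [← lintegral_subtype_comap measurableSet_Ioi (fun y => ENNReal.ofReal y * f y)]
        simp

/-- Integrability of the one-dimensional majorant. -/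
lemma integrableOn_bound {β : ℝ} (hβ : 1 < β) :
    IntegrableOn (fun y : ℝ => 4 / (y * (-Real.log y) ^ β)) (Set.Ioo 0 (1/3)) := by
  have h3 : (0:ℝ) < 3 := by norm_num
  have himg : (fun u : ℝ => Real.exp (-u)) '' Set.Ioi (Real.log 3) = Set.Ioo 0 (1/3) := by
    ext y
    constructor
    · rintro ⟨u, hu, rfl⟩
      refine ⟨Real.exp_pos _, ?_⟩
      show Real.exp (-u) < 1/3
      calc Real.exp (-u) < Real.exp (-(Real.log 3)) := Real.exp_lt_exp.2 (neg_lt_neg hu)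
        _ = 1/3 := by rw [Real.exp_neg, Real.exp_log h3, one_div]
    · rintro ⟨hy0, hy3⟩
      refine ⟨-Real.log y, ?_, ?_⟩
      · have h := Real.log_lt_log hy0 hy3
        rw [one_div, Real.log_inv] at h
        show Real.log 3 < -Real.log y
        linarith
      · show Real.exp (-(-Real.log y)) = y
        rw [neg_neg, Real.exp_log hy0]
  have hderiv : ∀ u ∈ Set.Ioi (Real.log 3),
      HasDerivWithinAt (fun u : ℝ => Real.exp (-u)) (-Real.exp (-u)) (Set.Ioi (Real.log 3)) u := by
    intro u _
    have h := ((Real.hasDerivAt_exp (-u)).comp u ((hasDerivAt_id u).neg))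
    have h2 := h.hasDerivWithinAt (s := Set.Ioi (Real.log 3))
    simp only [Function.comp_def, mul_neg, mul_one] at h2
    exact h2
  have hinj : Set.InjOn (fun u : ℝ => Real.exp (-u)) (Set.Ioi (Real.log 3)) :=
    (Real.exp_injective.comp neg_injective).injOn
  rw [← himg, integrableOn_image_iff_integrableOn_abs_deriv_smul measurableSet_Ioi hderiv hinj]
  have hlog3 : 0 < Real.log 3 := Real.log_pos (by norm_num)
  have hbase : IntegrableOn (fun u : ℝ => 4 * u ^ (-β)) (Set.Ioi (Real.log 3)) :=
    (integrableOn_Ioi_rpow_of_lt (by linarith) hlog3).const_mul 4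
  apply hbase.congr_fun _ measurableSet_Ioi
  intro u hu
  have hu0 : 0 < u := lt_trans hlog3 hu
  have he : (0:ℝ) < Real.exp (-u) := Real.exp_pos _
  have hub : (0:ℝ) < u ^ β := Real.rpow_pos_of_pos hu0 β
  show 4 * u ^ (-β) = |(-Real.exp (-u))| • (4 / (Real.exp (-u) * (-Real.log (Real.exp (-u))) ^ β))
  rw [smul_eq_mul, abs_neg, abs_of_pos he, Real.log_exp, neg_neg, Real.rpow_neg hu0.le]
  field_simp

/-- Pointwise bound on the Young function of the vorticity by a radial majorant. -/
lemma apa_pointwise_bound (α κ : ℝ) (hα1 : 1/2 < α) (hα2 : α < 1)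
    (hκ0 : 0 ≤ κ) (hκ : κ < α - 1/2) (x : E2) :
    Apa 2 κ (omegaPlus α x) ≤
      Set.indicator (Set.Ioo (0:ℝ) (1/3))
        (fun r => 4 / (r^2 * (-Real.log r) ^ (2*(α-κ)))) ‖x‖ := by
  rw [omegaPlus]
  by_cases hx : ‖x‖ < 1/3 ∧ 0 < x 1
  · rw [if_pos hx]
    obtain ⟨hr3, hx1⟩ := hx
    have hx0 : x ≠ 0 := by rintro rfl; exact lt_irrefl 0 hx1
    set r := ‖x‖ with hrdef
    have hr0 : 0 < r := norm_pos_iff.mpr hx0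
    have hlog3 : 1 < Real.log 3 := by
      rw [Real.lt_log_iff_exp_lt (by norm_num)]
      exact lt_trans Real.exp_one_lt_d9 (by norm_num)
    have hlogr : Real.log r < -Real.log 3 := by
      have h := Real.log_lt_log hr0 hr3
      rwa [one_div, Real.log_inv] at h
    set L := -Real.log r with hL
    have hL1 : 1 < L := by rw [hL]; linarith
    have hL0 : 0 < L := by linarith
    have habs : |Real.log r| = L := by rw [hL, abs_of_neg (by linarith : Real.log r < 0)]
    rw [habs, Set.indicator_of_mem (show r ∈ Set.Ioo (0:ℝ) (1/3) from ⟨hr0, hr3⟩), ← hL]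
    set s := 1 / (r * L ^ α) with hs
    have hLαpos : (0:ℝ) < L ^ α := Real.rpow_pos_of_pos hL0 α
    have hLα : 1 ≤ L ^ α := by
      simpa using Real.rpow_le_rpow_of_exponent_le hL1.le (by linarith : (0:ℝ) ≤ α)
    have hs0 : 0 < s := by rw [hs]; positivity
    have hsle : s ≤ 1/r := by
      rw [hs]
      exact one_div_le_one_div_of_le hr0 (le_mul_of_one_le_right hr0.le hLα)
    have hr2 : (2:ℝ) ≤ 1/r := by rw [le_div_iff₀ hr0]; linarith
    set t := Real.log (2 + s) with ht
    have ht0 : 0 ≤ t := Real.log_nonneg (by linarith)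
    have htb : t ≤ 2 * L := by
      have h1 : (2:ℝ) + s ≤ 2/r := by
        rw [show (2:ℝ)/r = 1/r + 1/r by ring]; linarith
      have h2 : t ≤ Real.log (2/r) := Real.log_le_log (by linarith) h1
      have h3 : Real.log (2/r) = Real.log 2 - Real.log r :=
        Real.log_div two_ne_zero hr0.ne'
      have h4 : Real.log 2 < 1 := by
        have := Real.log_two_lt_d9; linarith
      rw [h3] at h2
      have h5 : -Real.log r = L := hL.symm
      linarith [h2, h4, hL1]
    rw [Apa, Real.rpow_two]
    have hstep : (s * t ^ κ) ^ 2 ≤ (s * (2*L) ^ κ) ^ 2 := by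
      apply pow_le_pow_left₀ (by positivity)
      exact mul_le_mul_of_nonneg_left (Real.rpow_le_rpow ht0 htb hκ0) hs0.le
    refine le_trans hstep ?_
    have h2L : ((2:ℝ)*L)^κ = 2^κ * L^κ := Real.mul_rpow (by norm_num) hL0.le
    have key : (s * ((2:ℝ)*L)^κ)^2 = 2^(2*κ) / (r^2 * L^(2*(α-κ))) := by
      rw [h2L, hs, eq_div_iff (by positivity)]
      have hLL : (L^κ)^2 * L^(2*(α-κ)) = (L^α)^2 := by
        rw [pow_two, pow_two, ← Real.rpow_add hL0, ← Real.rpow_add hL0, ← Real.rpow_add hL0]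
        congr 1; ring
      have h22 : ((2:ℝ)^κ)^2 = 2^(2*κ) := by
        rw [pow_two, ← Real.rpow_add (by norm_num : (0:ℝ) < 2)]
        congr 1; ring
      field_simp
      linear_combination (L^κ)^2 * L^(2*(α-κ)) * h22 + 2^(2*κ) * hLL
    rw [key]
    have h24 : (2:ℝ)^(2*κ) ≤ 4 := by
      have h := Real.rpow_le_rpow_of_exponent_le (by norm_num : (1:ℝ) ≤ 2)
        (by linarith : 2*κ ≤ 2)
      rw [Real.rpow_two] at h
      linarith
    exact div_le_div_of_nonneg_right h24 (by positivity) |>.trans_eq rfl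
  · rw [if_neg hx]
    have h0 : Apa 2 κ 0 = 0 := by
      rw [Apa]; rw [zero_mul, Real.zero_rpow two_ne_zero]
    rw [h0]
    apply Set.indicator_nonneg
    intro r hr
    have hlr : 0 < -Real.log r := by
      have := Real.log_neg hr.1 (by linarith [hr.2])
      linarith
    positivity

/-- for `1/2 < α < 1` and `0 ≤ κ < α - 1/2`, the function `ω^α_+`
belongs to the Zygmund space `L²(log L)^κ(ℝ²)`, i.e. `∫ A_{2,κ}(ω^α_+) < ∞`. -/
theorem omegaPlus_in_Zygmund (α κ : ℝ) (hα1 : 1/2 < α) (hα2 : α < 1)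
    (hκ0 : 0 ≤ κ) (hκ : κ < α - 1/2) :
    ∫⁻ x : E2, ENNReal.ofReal (Apa 2 κ (omegaPlus α x)) < ⊤ := by
  set β := 2*(α-κ) with hβdef
  have hβ : 1 < β := by rw [hβdef]; linarith
  set g : ℝ → ℝ :=
    Set.indicator (Set.Ioo (0:ℝ) (1/3)) (fun r => 4 / (r^2 * (-Real.log r) ^ β)) with hg
  have hgmeas : Measurable fun r => ENNReal.ofReal (g r) := by
    apply Measurable.ennreal_ofReal
    rw [hg]
    apply Measurable.indicator _ measurableSet_Ioo
    measurability
  have hmono : ∫⁻ x : E2, ENNReal.ofReal (Apa 2 κ (omegaPlus α x)) ≤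
      ∫⁻ x : E2, ENNReal.ofReal (g ‖x‖) :=
    lintegral_mono fun x =>
      ENNReal.ofReal_le_ofReal (apa_pointwise_bound α κ hα1 hα2 hκ0 hκ x)
  refine lt_of_le_of_lt hmono ?_
  rw [lintegral_fun_norm_E2 _ hgmeas]
  apply ENNReal.mul_lt_top (measure_lt_top _ _)
  have hker : ∀ y : ℝ, ENNReal.ofReal y * ENNReal.ofReal (g y) =
      Set.indicator (Set.Ioo (0:ℝ) (1/3))
        (fun y => ENNReal.ofReal (y * (4 / (y^2 * (-Real.log y) ^ β)))) y := by
    intro y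
    by_cases hy : y ∈ Set.Ioo (0:ℝ) (1/3)
    · rw [Set.indicator_of_mem hy, hg, Set.indicator_of_mem hy,
        ENNReal.ofReal_mul hy.1.le]
    · rw [Set.indicator_of_notMem hy, hg, Set.indicator_of_notMem hy,
        ENNReal.ofReal_zero, mul_zero]
  calc ∫⁻ y in Set.Ioi (0:ℝ), ENNReal.ofReal y * ENNReal.ofReal (g y)
      ≤ ∫⁻ y, ENNReal.ofReal y * ENNReal.ofReal (g y) := setLIntegral_le_lintegral _ _
    _ = ∫⁻ y in Set.Ioo (0:ℝ) (1/3),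
          ENNReal.ofReal (y * (4 / (y^2 * (-Real.log y) ^ β))) := by
        simp_rw [hker]
        rw [lintegral_indicator measurableSet_Ioo]
    _ < ⊤ := by
        apply IntegrableOn.setLIntegral_lt_top
        apply (integrableOn_bound hβ).congr_fun _ measurableSet_Ioo
        intro y hy
        have hy0 : (0:ℝ) < y := hy.1
        have hlr : 0 < -Real.log y := by
          have := Real.log_neg hy0 (by linarith [hy.2])
          linarith
        have ht : (0:ℝ) < (-Real.log y) ^ β := Real.rpow_pos_of_pos hlr β
        field_simp
end

section
/- Let 1/2 < α < 1 and let x₁ > 0. Then ∫_{B⁺(0;1/3)} [y₂ / (2π((x₁ − y₁)² + y₂²))] · ω^α_+(y) dy = (1/(2π x₁)) ∫₀^{1/3} [log((r + x₁)/|r − x₁|)] / (log(1/r))^α dr; that is, on the positive horizontal axis the first component of K ∗ ω^α_+ is given by this one-dimensional integral. -/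
open MeasureTheory Real Metric Filter
open scoped ENNReal Topology

theorem lintegral_comp_polarCoord_symm' (g : ℝ × ℝ → ℝ≥0∞) :
    (∫⁻ p in polarCoord.target, ENNReal.ofReal p.1 * g (polarCoord.symm p)) = ∫⁻ p, g p := by
  set B : ℝ × ℝ → ℝ × ℝ →L[ℝ] ℝ × ℝ := fun p =>
    LinearMap.toContinuousLinearMap (Matrix.toLin (Module.Basis.finTwoProd ℝ) (Module.Basis.finTwoProd ℝ)
      !![Real.cos p.2, -p.1 * Real.sin p.2; Real.sin p.2, p.1 * Real.cos p.2])
  have A : ∀ p ∈ polarCoord.target, HasFDerivWithinAt polarCoord.symm (B p) polarCoord.target p :=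
    fun p _ => (hasFDerivAt_polarCoord_symm p).hasFDerivWithinAt
  have B_det : ∀ p, (B p).det = p.1 := by
    intro p
    conv_rhs => rw [← one_mul p.1, ← cos_sq_add_sin_sq p.2]
    simp only [B, neg_mul, LinearMap.det_toContinuousLinearMap, LinearMap.det_toLin,
      Matrix.det_fin_two_of, sub_neg_eq_add]
    ring
  symm
  calc
    ∫⁻ p, g p = ∫⁻ p in polarCoord.source, g p := by
      rw [← setLIntegral_univ]
      exact setLIntegral_congr polarCoord_source_ae_eq_univ.symm
    _ = ∫⁻ p in polarCoord.symm '' polarCoord.target, g p := by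
      rw [polarCoord.symm_image_target_eq_source]
    _ = ∫⁻ p in polarCoord.target, ENNReal.ofReal |(B p).det| * g (polarCoord.symm p) :=
      lintegral_image_eq_lintegral_abs_det_fderiv_mul volume
        polarCoord.open_target.measurableSet A polarCoord.symm.injOn g
    _ = ∫⁻ p in polarCoord.target, ENNReal.ofReal p.1 * g (polarCoord.symm p) := by
      refine setLIntegral_congr_fun polarCoord.open_target.measurableSet
        (fun x hx => ?_)
      rw [B_det, abs_of_pos hx.1]

private lemma arith2 (pp x1 L Lg : ℝ) (hp : pp ≠ 0) (hx : x1 ≠ 0) (hL : L ≠ 0) :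
    1 / (2 * pp * L) * (1 / x1 * Lg) = 1 / (2 * pp * x1) * (Lg / L) := by
  field_simp

private lemma arith3 (x1 r s E : ℝ) (hE : E ≠ 0) (hx : x1 ≠ 0) :
    r * s / E = 1 / (2 * x1) * (2 * x1 * r * s / E) := by
  field_simp

private lemma arith1 (pp r L D s : ℝ) (hp : pp ≠ 0) (hr : r ≠ 0) (hL : L ≠ 0) (hD : D ≠ 0) :
    r * (r * s / (2 * pp * D) * (1 / (r * L))) = 1 / (2 * pp * L) * (r * s / D) := by
  field_simp

/-- on the positive horizontal axis, the first component of `K ∗ ω^α_+`,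
namely `∫_{B⁺(0;1/3)} y₂/(2π((x₁-y₁)²+y₂²)) ω^α_+(y) dy`, equals
`(1/(2π x₁)) ∫₀^{1/3} log((r+x₁)/|r-x₁|) / (log(1/r))^α dr`. -/
theorem u1_on_axis (α : ℝ) (hα1 : 1/2 < α) (hα2 : α < 1) (x1 : ℝ) (hx1 : 0 < x1) :
    ∫ y in {y : E2 | ‖y‖ < 1/3 ∧ 0 < y 1},
        y 1 / (2 * Real.pi * ((x1 - y 0) ^ 2 + y 1 ^ 2)) * omegaPlus α y =
      (1 / (2 * Real.pi * x1)) *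
        ∫ r in (0:ℝ)..(1/3), Real.log ((r + x1) / |r - x1|) / Real.log (1/r) ^ α := by
  have hπ : (0:ℝ) < Real.pi := Real.pi_pos
  have hα0 : (0:ℝ) ≤ α := by linarith
  set c : ℝ := 1 / (2 * Real.pi * x1) with hc
  have hc0 : 0 ≤ c := by positivity
  set h : ℝ → ℝ := fun r => Real.log ((r + x1) / |r - x1|) / Real.log (1/r) ^ α with hh
  set F : ℝ × ℝ → ℝ := fun p =>
    if Real.sqrt (p.1 ^ 2 + p.2 ^ 2) < 1/3 ∧ 0 < p.2 then
      p.2 / (2 * Real.pi * ((x1 - p.1) ^ 2 + p.2 ^ 2)) *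
        (1 / (Real.sqrt (p.1 ^ 2 + p.2 ^ 2) *
          |Real.log (Real.sqrt (p.1 ^ 2 + p.2 ^ 2))| ^ α)) else 0 with hF
  have hnorm : ∀ y : E2, ‖y‖ = Real.sqrt ((y 0) ^ 2 + (y 1) ^ 2) := by
    intro y
    rw [EuclideanSpace.norm_eq, Fin.sum_univ_two, Real.norm_eq_abs, Real.norm_eq_abs,
      sq_abs, sq_abs]
  have hsq : Measurable fun p : ℝ × ℝ => Real.sqrt (p.1 ^ 2 + p.2 ^ 2) :=
    (((continuous_fst.pow 2).add (continuous_snd.pow 2)).sqrt).measurable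
  -- measurability of F
  have hFmeas : Measurable F := by
    apply Measurable.ite
    · exact (measurableSet_lt hsq measurable_const).inter
        (measurableSet_lt measurable_const measurable_snd)
    · exact (measurable_snd.div (measurable_const.mul
        (((measurable_const.sub measurable_fst).pow_const 2).add
          (measurable_snd.pow_const 2)))).mul
        (measurable_const.div (hsq.mul
          ((Real.continuous_rpow_const hα0).measurable.comp
            (continuous_abs.measurable.comp (Real.measurable_log.comp hsq)))))
    · exact measurable_const
  -- Step 1 : reduce to ℝ × ℝ
  have key1 : (∫ y in {y : E2 | ‖y‖ < 1/3 ∧ 0 < y 1},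
      y 1 / (2 * Real.pi * ((x1 - y 0) ^ 2 + y 1 ^ 2)) * omegaPlus α y) = ∫ p, F p := by
    have hS : MeasurableSet {y : E2 | ‖y‖ < 1/3 ∧ 0 < y 1} := by
      have he : {y : E2 | ‖y‖ < 1/3 ∧ 0 < y 1}
          = {y : E2 | ‖y‖ < 1/3} ∩ {y : E2 | 0 < y 1} := rfl
      rw [he]
      exact (measurableSet_lt measurable_norm measurable_const).inter
        (measurableSet_lt measurable_const
          ((measurable_pi_apply 1).comp (MeasurableEquiv.toLp 2 (Fin 2 → ℝ)).symm.measurable))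
    have hψ : MeasurePreserving
        (fun y : E2 => ((MeasurableEquiv.toLp 2 (Fin 2 → ℝ)).symm.trans
          MeasurableEquiv.finTwoArrow) y) volume volume :=
      (volume_preserving_finTwoArrow ℝ).comp
        (EuclideanSpace.volume_preserving_symm_measurableEquiv_toLp (Fin 2))
    rw [← integral_indicator hS,
      ← hψ.integral_comp (MeasurableEquiv.measurableEmbedding _) F]
    refine integral_congr_ae (Filter.Eventually.of_forall fun y => ?_)
    dsimp only
    have happ : (((MeasurableEquiv.toLp 2 (Fin 2 → ℝ)).symm.trans
        MeasurableEquiv.finTwoArrow) y) = (y 0, y 1) := rfl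
    rw [happ]
    simp only [Set.indicator_apply, Set.mem_setOf_eq, omegaPlus, hF]
    by_cases hy : ‖y‖ < 1/3 ∧ 0 < y 1
    · rw [if_pos hy, if_pos hy, ← hnorm y, if_pos hy]
    · rw [if_neg hy, ← hnorm y, if_neg hy]
  -- Step 2 : Bochner to lintegral
  have hFnn : ∀ p, 0 ≤ F p := by
    intro p
    rw [hF]
    dsimp only
    split_ifs with hp
    · have h2 := hp.2
      positivity
    · exact le_refl 0
  have key2 : (∫ p : ℝ × ℝ, F p)
      = (∫⁻ p : ℝ × ℝ, ENNReal.ofReal (F p)).toReal :=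
    integral_eq_lintegral_of_nonneg_ae (Filter.Eventually.of_forall hFnn)
      hFmeas.aestronglyMeasurable
  -- Step 3 : polar coordinates
  have key3 : (∫⁻ p : ℝ × ℝ, ENNReal.ofReal (F p))
      = ∫⁻ r in Set.Ioi (0:ℝ), ∫⁻ θ in Set.Ioo (-Real.pi) Real.pi,
          ENNReal.ofReal r * ENNReal.ofReal (F (r * Real.cos θ, r * Real.sin θ)) := by
    rw [← lintegral_comp_polarCoord_symm' (fun p => ENNReal.ofReal (F p))]
    rw [polarCoord_target, Measure.volume_eq_prod, ← Measure.prod_restrict]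
    rw [lintegral_prod _ ?_]
    · refine lintegral_congr fun r => lintegral_congr fun θ => ?_
      rw [polarCoord_symm_apply]
    · refine (Measurable.aemeasurable ?_)
      exact (measurable_fst.ennreal_ofReal).mul
        ((hFmeas.comp
          ((continuous_fst.mul (Real.continuous_cos.comp continuous_snd)).prodMk
            (continuous_fst.mul (Real.continuous_sin.comp continuous_snd))).measurable).ennreal_ofReal)
  -- Step 5 : the inner angular integral
  have inner_eval : ∀ r ∈ Set.Ioi (0:ℝ), r ≠ x1 →
      (∫⁻ θ in Set.Ioo (-Real.pi) Real.pi,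
          ENNReal.ofReal r * ENNReal.ofReal (F (r * Real.cos θ, r * Real.sin θ)))
        = ENNReal.ofReal (if r < 1/3 then c * h r else 0) := by
    intro r hr hrx
    rw [Set.mem_Ioi] at hr
    have hnr : ∀ θ : ℝ, Real.sqrt ((r * Real.cos θ) ^ 2 + (r * Real.sin θ) ^ 2) = r := by
      intro θ
      rw [show (r * Real.cos θ) ^ 2 + (r * Real.sin θ) ^ 2 = r ^ 2 by
        linear_combination r ^ 2 * Real.sin_sq_add_cos_sq θ]
      exact Real.sqrt_sq hr.le
    by_cases h13 : r < 1/3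
    swap
    · rw [if_neg h13, ENNReal.ofReal_zero]
      rw [lintegral_congr (fun θ => ?_), lintegral_zero]
      have hcond : ¬(Real.sqrt ((r * Real.cos θ) ^ 2 + (r * Real.sin θ) ^ 2) < 1/3
          ∧ 0 < (r * Real.cos θ, r * Real.sin θ).2) := by
        rw [hnr θ]; exact fun hco => h13 hco.1
      have : F (r * Real.cos θ, r * Real.sin θ) = 0 := by
        rw [hF]; exact if_neg hcond
      rw [this, ENNReal.ofReal_zero, mul_zero]
    -- main case : r < 1/3
    rw [if_pos h13]
    have hlogr_neg : Real.log r < 0 := Real.log_neg hr (by linarith)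
    have habs : |Real.log r| = Real.log (1/r) := by
      rw [one_div, Real.log_inv, abs_of_neg hlogr_neg]
    have hLpos : (0:ℝ) < Real.log (1/r) := by
      rw [one_div, Real.log_inv]; linarith
    have hLα : (0:ℝ) < Real.log (1/r) ^ α := Real.rpow_pos_of_pos hLpos α
    have hE : ∀ θ : ℝ, 0 < x1 ^ 2 - 2 * x1 * r * Real.cos θ + r ^ 2 := by
      intro θ
      have h1 : Real.cos θ ≤ 1 := Real.cos_le_one θ
      have h2 : (0:ℝ) < (x1 - r) ^ 2 := sq_pos_of_ne_zero (sub_ne_zero.mpr (Ne.symm hrx))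
      nlinarith [mul_pos hx1 hr]
    set G : ℝ → ℝ := fun θ => r * Real.sin θ / (x1 ^ 2 - 2 * x1 * r * Real.cos θ + r ^ 2)
      with hG
    set c2 : ℝ := 1 / (2 * Real.pi * Real.log (1/r) ^ α) with hc2
    have hc20 : 0 ≤ c2 := by positivity
    -- 5a : restrict to (0, π) and simplify the integrand
    have step_a : (∫⁻ θ in Set.Ioo (-Real.pi) Real.pi,
        ENNReal.ofReal r * ENNReal.ofReal (F (r * Real.cos θ, r * Real.sin θ)))
        = ∫⁻ θ in Set.Ioo 0 Real.pi, ENNReal.ofReal (c2 * G θ) := by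
      have hpoint : ∀ θ ∈ Set.Ioo (-Real.pi) Real.pi,
          ENNReal.ofReal r * ENNReal.ofReal (F (r * Real.cos θ, r * Real.sin θ))
            = (Set.Ioo (0:ℝ) Real.pi).indicator (fun θ => ENNReal.ofReal (c2 * G θ)) θ := by
        intro θ hθ
        by_cases hmem : θ ∈ Set.Ioo (0:ℝ) Real.pi
        · rw [Set.indicator_of_mem hmem]
          have hsin : 0 < Real.sin θ := Real.sin_pos_of_pos_of_lt_pi hmem.1 hmem.2
          have hcond : Real.sqrt ((r * Real.cos θ) ^ 2 + (r * Real.sin θ) ^ 2) < 1/3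
              ∧ 0 < (r * Real.cos θ, r * Real.sin θ).2 := by
            rw [hnr θ]; exact ⟨h13, mul_pos hr hsin⟩
          have hFval : F (r * Real.cos θ, r * Real.sin θ)
              = (r * Real.sin θ) / (2 * Real.pi * ((x1 - r * Real.cos θ) ^ 2
                  + (r * Real.sin θ) ^ 2)) * (1 / (r * Real.log (1/r) ^ α)) := by
            rw [hF]
            dsimp only
            rw [if_pos hcond, hnr θ, habs]
          rw [hFval, ← ENNReal.ofReal_mul hr.le]
          congr 1
          have hDE : (x1 - r * Real.cos θ) ^ 2 + (r * Real.sin θ) ^ 2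
              = x1 ^ 2 - 2 * x1 * r * Real.cos θ + r ^ 2 := by
            linear_combination r ^ 2 * Real.sin_sq_add_cos_sq θ
          rw [hDE]
          simp only [hG, hc2]
          exact arith1 Real.pi r _ _ _ Real.pi_ne_zero hr.ne' hLα.ne' (hE θ).ne'
        · rw [Set.indicator_of_notMem hmem]
          have hθle : θ ≤ 0 := by
            by_contra hgt
            exact hmem ⟨lt_of_not_ge hgt, hθ.2⟩
          have hsin : Real.sin θ ≤ 0 :=
            Real.sin_nonpos_of_nonpos_of_neg_pi_le hθle hθ.1.le
          have hcond : ¬(Real.sqrt ((r * Real.cos θ) ^ 2 + (r * Real.sin θ) ^ 2) < 1/3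
              ∧ 0 < (r * Real.cos θ, r * Real.sin θ).2) := by
            rintro ⟨-, hpos⟩
            simp only at hpos
            nlinarith [mul_nonneg hr.le (neg_nonneg.2 hsin)]
          have : F (r * Real.cos θ, r * Real.sin θ) = 0 := by rw [hF]; exact if_neg hcond
          rw [this, ENNReal.ofReal_zero, mul_zero]
      rw [setLIntegral_congr_fun measurableSet_Ioo hpoint]
      rw [lintegral_indicator measurableSet_Ioo, Measure.restrict_restrict measurableSet_Ioo]
      congr 1
      have hsub : Set.Ioo (0:ℝ) Real.pi ⊆ Set.Ioo (-Real.pi) Real.pi := by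
        intro θ hθ
        exact ⟨by linarith [hθ.1], hθ.2⟩
      rw [Set.inter_eq_self_of_subset_left hsub]
    rw [step_a]
    have hGcont : Continuous G := by
      apply Continuous.div
      · exact continuous_const.mul Real.continuous_sin
      · exact (continuous_const.sub (continuous_const.mul Real.continuous_cos)).add
          continuous_const
      · exact fun θ => (hE θ).ne'
    have hGnn : 0 ≤ᵐ[volume.restrict (Set.Ioo (0:ℝ) Real.pi)] G := by
      refine (ae_restrict_iff' measurableSet_Ioo).mpr
        (Filter.Eventually.of_forall fun θ hθ => ?_)
      have hsin : 0 < Real.sin θ := Real.sin_pos_of_pos_of_lt_pi hθ.1 hθ.2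
      simp only [hG]
      exact div_nonneg (mul_nonneg hr.le hsin.le) (hE θ).le
    have hGint : IntegrableOn G (Set.Ioo (0:ℝ) Real.pi) :=
      (hGcont.integrableOn_Icc).mono_set Set.Ioo_subset_Icc_self
    rw [lintegral_congr (fun θ => ENNReal.ofReal_mul (p := c2) (q := G θ) hc20)]
    rw [lintegral_const_mul' _ _ ENNReal.ofReal_ne_top]
    rw [← ofReal_integral_eq_lintegral_ofReal hGint hGnn]
    have hint_eval : ∫ θ in Set.Ioo (0:ℝ) Real.pi, G θ
        = 1 / x1 * Real.log ((r + x1) / |r - x1|) := by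
      rw [← integral_Ioc_eq_integral_Ioo, ← intervalIntegral.integral_of_le Real.pi_pos.le]
      have hderiv : ∀ t ∈ Set.uIcc (0:ℝ) Real.pi,
          HasDerivAt (fun θ => 1 / (2 * x1)
            * Real.log (x1 ^ 2 - 2 * x1 * r * Real.cos θ + r ^ 2)) (G t) t := by
        intro t _
        have h1 : HasDerivAt (fun θ : ℝ => x1 ^ 2 - 2 * x1 * r * Real.cos θ + r ^ 2)
            (2 * x1 * r * Real.sin t) t := by
          have h0 := (((Real.hasDerivAt_cos t).const_mul (2 * x1 * r)).const_sub
            (x1 ^ 2)).add_const (r ^ 2)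
          exact h0.congr_deriv (by ring)
        have h4 := (h1.log (hE t).ne').const_mul (1 / (2 * x1))
        refine h4.congr_deriv ?_
        simp only [hG]
        exact (arith3 x1 r (Real.sin t) _ (hE t).ne' hx1.ne').symm
      rw [intervalIntegral.integral_eq_sub_of_hasDerivAt hderiv
        (hGcont.intervalIntegrable _ _)]
      simp only [Real.cos_pi, Real.cos_zero]
      have e1 : x1 ^ 2 - 2 * x1 * r * (-1:ℝ) + r ^ 2 = (r + x1) ^ 2 := by ring
      have e2 : x1 ^ 2 - 2 * x1 * r * (1:ℝ) + r ^ 2 = (r - x1) ^ 2 := by ring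
      rw [e1, e2, ← sq_abs (r - x1), Real.log_pow, Real.log_pow,
        Real.log_div (by positivity) (abs_ne_zero.mpr (sub_ne_zero.mpr hrx))]
      push_cast
      ring
    rw [hint_eval, ← ENNReal.ofReal_mul hc20]
    congr 1
    simp only [hc2, hc, hh]
    exact arith2 Real.pi x1 _ _ Real.pi_ne_zero hx1.ne' hLα.ne'
  -- Step 6 : assemble
  rw [key1, key2, key3]
  have hae : (fun r => ∫⁻ θ in Set.Ioo (-Real.pi) Real.pi,
        ENNReal.ofReal r * ENNReal.ofReal (F (r * Real.cos θ, r * Real.sin θ)))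
      =ᵐ[volume.restrict (Set.Ioi (0:ℝ))]
      (fun r => ENNReal.ofReal (if r < 1/3 then c * h r else 0)) := by
    have hsing : ∀ᵐ r ∂(volume : Measure ℝ), r ≠ x1 := by
      have hset : {a : ℝ | ¬ a ≠ x1} = {x1} := by ext a; simp
      rw [ae_iff, hset]
      exact measure_singleton x1
    filter_upwards [ae_restrict_of_ae hsing, ae_restrict_mem measurableSet_Ioi]
      with r hr1 hr2
    exact inner_eval r hr2 hr1
  rw [lintegral_congr_ae hae]
  have houter : (∫⁻ r in Set.Ioi (0:ℝ), ENNReal.ofReal (if r < 1/3 then c * h r else 0))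
      = ENNReal.ofReal c * ∫⁻ r in Set.Ioo (0:ℝ) (1/3), ENNReal.ofReal (h r) := by
    have hpt : ∀ r ∈ Set.Ioi (0:ℝ),
        ENNReal.ofReal (if r < 1/3 then c * h r else 0)
          = (Set.Ioo (0:ℝ) (1/3)).indicator
              (fun r => ENNReal.ofReal c * ENNReal.ofReal (h r)) r := by
      intro r hr
      rw [Set.mem_Ioi] at hr
      by_cases h13 : r < 1/3
      · rw [if_pos h13, Set.indicator_of_mem (Set.mem_Ioo.mpr ⟨hr, h13⟩), ENNReal.ofReal_mul hc0]
      · rw [if_neg h13, Set.indicator_of_notMem (fun hm => h13 hm.2), ENNReal.ofReal_zero]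
    rw [setLIntegral_congr_fun measurableSet_Ioi hpt]
    rw [lintegral_indicator measurableSet_Ioo, Measure.restrict_restrict measurableSet_Ioo]
    have hsub : Set.Ioo (0:ℝ) (1/3) ⊆ Set.Ioi (0:ℝ) := fun r hr => hr.1
    rw [Set.inter_eq_self_of_subset_left hsub]
    rw [lintegral_const_mul' _ _ ENNReal.ofReal_ne_top]
  rw [houter]
  have hhm : AEStronglyMeasurable h (volume.restrict (Set.Ioo (0:ℝ) (1/3))) := by
    refine Measurable.aestronglyMeasurable ?_
    apply Measurable.div
    · exact Real.measurable_log.comp ((measurable_id.add_const x1).div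
        (continuous_abs.measurable.comp (measurable_id.sub_const x1)))
    · exact (Real.continuous_rpow_const hα0).measurable.comp
        (Real.measurable_log.comp (measurable_const.div measurable_id))
  have hhnn : 0 ≤ᵐ[volume.restrict (Set.Ioo (0:ℝ) (1/3))] h := by
    refine (ae_restrict_iff' measurableSet_Ioo).mpr
      (Filter.Eventually.of_forall fun r hr => ?_)
    have hlogr : Real.log r < 0 := Real.log_neg hr.1 (by linarith [hr.2])
    have hLpos : (0:ℝ) < Real.log (1/r) := by rw [one_div, Real.log_inv]; linarith
    simp only [hh]
    apply div_nonneg _ (Real.rpow_pos_of_pos hLpos α).le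
    rcases eq_or_ne r x1 with he | hne
    · rw [he, sub_self, abs_zero, div_zero, Real.log_zero]
    · apply Real.log_nonneg
      rw [le_div_iff₀ (abs_pos.mpr (sub_ne_zero.mpr hne)), one_mul]
      exact abs_le.mpr ⟨by linarith [hr.1], by linarith [hr.1]⟩
  rw [intervalIntegral.integral_of_le (by norm_num : (0:ℝ) ≤ 1/3),
    integral_Ioc_eq_integral_Ioo, integral_eq_lintegral_of_nonneg_ae hhnn hhm,
    ENNReal.toReal_mul, ENNReal.toReal_ofReal hc0]
end

section
/- Let 1/2 < α < 1. There exists a constant C > 0 such that for every 0 < x₁ ≤ 1/36, ∫₀^{1/3} [log((r + x₁)/|r − x₁|)] / (log(1/r))^α dr ≥ C x₁ (log(1/x₁))^{1−α}. -/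
open MeasureTheory Real Metric Filter
open scoped ENNReal Topology

lemma intervalIntegrable_log_abs (a b : ℝ) :
    IntervalIntegrable (fun x => Real.log |x|) volume a b := by
  suffices h : ∀ c : ℝ, 0 ≤ c → IntervalIntegrable (fun x => Real.log |x|) volume 0 c by
    have key : ∀ c : ℝ, IntervalIntegrable (fun x => Real.log |x|) volume 0 c := by
      intro c
      rcases le_or_gt 0 c with hc | hc
      · exact h c hc
      · have h2 := (IntervalIntegrable.iff_comp_neg (by simp)).mp (h (-c) (by linarith))
        simp only [abs_neg, neg_zero, neg_neg] at h2
        exact h2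
    exact (key a).symm.trans (key b)
  intro c hc
  have hmeas : Measurable fun x : ℝ => Real.log |x| :=
    Real.measurable_log.comp measurable_abs
  have hdom : IntervalIntegrable (fun x : ℝ => 2 * x ^ (-(1/2) : ℝ) + x) volume 0 c :=
    ((intervalIntegral.intervalIntegrable_rpow' (by norm_num)).const_mul 2).add
      intervalIntegral.intervalIntegrable_id
  refine hdom.mono_fun' hmeas.aestronglyMeasurable ?_
  filter_upwards [ae_restrict_mem measurableSet_uIoc] with x hx
  rw [Set.uIoc_of_le hc] at hx
  obtain ⟨hx0, hxc⟩ := hx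
  rw [abs_of_pos hx0]
  have hpow : 0 ≤ x ^ (-(1/2) : ℝ) := Real.rpow_nonneg hx0.le _
  have h1 : Real.log x ≤ x := Real.log_le_self hx0.le
  have h2 : -Real.log x ≤ 2 * x ^ (-(1/2) : ℝ) := by
    rw [← Real.log_inv]
    calc Real.log x⁻¹ ≤ (x⁻¹) ^ ((1:ℝ)/2) / (1/2) :=
          Real.log_le_rpow_div (inv_nonneg.mpr hx0.le) (by norm_num)
      _ = 2 * x ^ (-(1/2) : ℝ) := by
          rw [Real.inv_rpow hx0.le, ← Real.rpow_neg hx0.le]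
          ring
  have : |Real.log x| ≤ 2 * x ^ (-(1/2) : ℝ) + x := by
    rcases abs_cases (Real.log x) with ⟨he, _⟩ | ⟨he, _⟩ <;> rw [he] <;> nlinarith
  simpa [Real.norm_eq_abs] using this

lemma inv_integrand_intervalIntegrable (α a b : ℝ) (ha : 0 < a) (hab : a ≤ b) (hb : b < 1) :
    IntervalIntegrable (fun r : ℝ => (r * Real.log (1/r) ^ α)⁻¹) volume a b := by
  have huIcc : Set.uIcc a b = Set.Icc a b := Set.uIcc_of_le hab
  have hmem : ∀ r ∈ Set.uIcc a b, 0 < r ∧ r < 1 := by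
    intro r hr
    rw [huIcc] at hr
    exact ⟨lt_of_lt_of_le ha hr.1, lt_of_le_of_lt hr.2 hb⟩
  have hlogpos : ∀ r ∈ Set.uIcc a b, 0 < Real.log (1/r) := by
    intro r hr
    obtain ⟨h0, h1⟩ := hmem r hr
    exact Real.log_pos (by rw [lt_div_iff₀ h0]; linarith)
  have hcont : ContinuousOn (fun r : ℝ => (r * Real.log (1/r) ^ α)⁻¹) (Set.uIcc a b) := by
    apply ContinuousOn.inv₀
    · exact continuousOn_id.mul
        (((continuousOn_const.div continuousOn_id
            (fun x hx => (hmem x hx).1.ne')).log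
            (fun x hx => one_div_ne_zero (hmem x hx).1.ne')).rpow_const
          (fun x hx => Or.inl (hlogpos x hx).ne'))
    · intro x hx
      have := (hmem x hx).1
      have := hlogpos x hx
      positivity
  exact hcont.intervalIntegrable

lemma ftc_piece (α : ℝ) (hα2 : α < 1) (a b : ℝ) (ha : 0 < a) (hab : a ≤ b) (hb : b < 1) :
    ∫ r in a..b, (r * Real.log (1/r) ^ α)⁻¹ =
      (Real.log (1/a) ^ (1-α) - Real.log (1/b) ^ (1-α)) / (1-α) := by
  have hne : (1:ℝ) - α ≠ 0 := by linarith
  have huIcc : Set.uIcc a b = Set.Icc a b := Set.uIcc_of_le hab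
  have hmem : ∀ r ∈ Set.uIcc a b, 0 < r ∧ r < 1 := by
    intro r hr
    rw [huIcc] at hr
    exact ⟨lt_of_lt_of_le ha hr.1, lt_of_le_of_lt hr.2 hb⟩
  have hlogpos : ∀ r ∈ Set.uIcc a b, 0 < Real.log (1/r) := by
    intro r hr
    obtain ⟨h0, h1⟩ := hmem r hr
    exact Real.log_pos (by rw [lt_div_iff₀ h0]; linarith)
  have hcont : ContinuousOn (fun r : ℝ => (r * Real.log (1/r) ^ α)⁻¹) (Set.uIcc a b) := by
    apply ContinuousOn.inv₀
    · exact continuousOn_id.mul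
        (((continuousOn_const.div continuousOn_id
            (fun x hx => (hmem x hx).1.ne')).log
            (fun x hx => one_div_ne_zero (hmem x hx).1.ne')).rpow_const
          (fun x hx => Or.inl (hlogpos x hx).ne'))
    · intro x hx
      have := (hmem x hx).1
      have := hlogpos x hx
      positivity
  have hderiv : ∀ r ∈ Set.uIcc a b,
      HasDerivAt (fun r : ℝ => -(1-α)⁻¹ * Real.log (1/r) ^ (1-α))
        ((r * Real.log (1/r) ^ α)⁻¹) r := by
    intro r hr
    obtain ⟨hr0, hr1⟩ := hmem r hr
    have hlr := hlogpos r hr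
    have h1 : HasDerivAt (fun x : ℝ => Real.log (1/x)) (-r⁻¹) r := by
      have hinner : HasDerivAt (fun x : ℝ => 1/x) (-(r^2)⁻¹) r := by
        simpa [one_div] using hasDerivAt_inv hr0.ne'
      have := (Real.hasDerivAt_log (by positivity : (1:ℝ)/r ≠ 0)).comp r hinner
      refine this.congr_deriv ?_
      field_simp
    have h2 : HasDerivAt (fun y : ℝ => y ^ (1-α))
        ((1-α) * Real.log (1/r) ^ (1-α-1)) (Real.log (1/r)) :=
      Real.hasDerivAt_rpow_const (Or.inl hlr.ne')
    have h3 := (h2.comp r h1).const_mul (-(1-α)⁻¹)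
    refine h3.congr_deriv ?_
    have he : (1:ℝ) - α - 1 = -α := by ring
    rw [he, Real.rpow_neg hlr.le]
    have hpow : (0:ℝ) < Real.log (1/r) ^ α := Real.rpow_pos_of_pos hlr _
    field_simp
  rw [intervalIntegral.integral_eq_sub_of_hasDerivAt hderiv (hcont.intervalIntegrable)]
  field_simp
  ring

lemma key_arith (t L : ℝ) (ht0 : 0 < t) (hL : Real.log 36 ≤ L) :
    (1 - (2:ℝ)^(-t)) * (2:ℝ)^(-t) * L ^ t ≤ (L - Real.log 2) ^ t - Real.log 3 ^ t := by
  have hlog3 : 0 < Real.log 3 := Real.log_pos (by norm_num)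
  have hL0 : 0 < L := lt_of_lt_of_le (Real.log_pos (by norm_num)) hL
  have hlog4 : Real.log 4 = 2 * Real.log 2 := by
    rw [show (4:ℝ) = 2^2 by norm_num, Real.log_pow]; push_cast; ring
  have hlog18 : Real.log 18 = Real.log 2 + 2 * Real.log 3 := by
    rw [show (18:ℝ) = 2 * 3^2 by norm_num, Real.log_mul two_ne_zero (by norm_num),
      Real.log_pow]
    push_cast; ring
  have h4 : Real.log 2 ≤ L / 2 := by
    have := Real.log_le_log (by norm_num : (0:ℝ) < 4) (by norm_num : (4:ℝ) ≤ 36)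
    linarith [hlog4 ▸ this]
  have h5 : 2 * Real.log 3 ≤ L - Real.log 2 := by
    have := Real.log_le_log (by norm_num : (0:ℝ) < 18) (by norm_num : (18:ℝ) ≤ 36)
    linarith [hlog18 ▸ this]
  set A := L - Real.log 2 with hA
  have hA0 : 0 < A := by linarith
  have hA2 : L / 2 ≤ A := by linarith
  have hs0 : (0:ℝ) < (2:ℝ)^(-t) := Real.rpow_pos_of_pos (by norm_num) _
  have hs1 : (2:ℝ)^(-t) < 1 :=
    Real.rpow_lt_one_of_one_lt_of_neg (by norm_num) (by linarith)
  have hhalf : ∀ B : ℝ, 0 ≤ B → (B/2) ^ t = B ^ t * (2:ℝ)^(-t) := by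
    intro B hB
    rw [div_eq_mul_inv, Real.mul_rpow hB (by norm_num),
      Real.inv_rpow (by norm_num : (0:ℝ) ≤ 2), ← Real.rpow_neg (by norm_num : (0:ℝ) ≤ 2)]
  have e1 : Real.log 3 ^ t ≤ A ^ t * (2:ℝ)^(-t) := by
    rw [← hhalf A hA0.le]
    exact Real.rpow_le_rpow hlog3.le (by linarith) ht0.le
  have e2 : L ^ t * (2:ℝ)^(-t) ≤ A ^ t := by
    rw [← hhalf L hL0.le]
    exact Real.rpow_le_rpow (by positivity) hA2 ht0.le
  nlinarith [mul_le_mul_of_nonneg_right e2 (sub_nonneg.2 hs1.le),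
    Real.rpow_nonneg hL0.le t, Real.rpow_nonneg hA0.le t]

/-- for `1/2 < α < 1` there is `C > 0` such that for all `0 < x1 ≤ 1/36`,
`∫₀^{1/3} log((r+x1)/|r-x1|) / (log(1/r))^α dr ≥ C x1 (log(1/x1))^{1-α}`. -/
theorem axis_integral_lower_bound (α : ℝ) (hα1 : 1/2 < α) (hα2 : α < 1) :
    ∃ C : ℝ, 0 < C ∧ ∀ x1 : ℝ, 0 < x1 → x1 ≤ 1/36 →
      C * x1 * Real.log (1/x1) ^ (1 - α) ≤
        ∫ r in (0:ℝ)..(1/3), Real.log ((r + x1) / |r - x1|) / Real.log (1/r) ^ α := by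
  have ht0 : (0:ℝ) < 1 - α := by linarith
  have hα0 : (0:ℝ) < α := by linarith
  have hs0 : (0:ℝ) < (2:ℝ)^(-(1-α)) := Real.rpow_pos_of_pos (by norm_num) _
  have hs1 : (2:ℝ)^(-(1-α)) < 1 :=
    Real.rpow_lt_one_of_one_lt_of_neg (by norm_num) (by linarith)
  refine ⟨(1 - (2:ℝ)^(-(1-α))) * (2:ℝ)^(-(1-α)) / (1-α), by
    have h1 : 0 < 1 - (2:ℝ)^(-(1-α)) := by linarith
    positivity, ?_⟩
  intro x1 hx0 hx36
  set f : ℝ → ℝ := fun r => Real.log ((r + x1) / |r - x1|) / Real.log (1/r) ^ α with hf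
  -- nonnegativity of f on [0, 1/3]
  have hf_nonneg : ∀ r ∈ Set.Icc (0:ℝ) (1/3), 0 ≤ f r := by
    intro r hr
    apply div_nonneg
    · by_cases hrx : r = x1
      · simp [hrx]
      · have habs : 0 < |r - x1| := abs_pos.2 (sub_ne_zero.2 hrx)
        apply Real.log_nonneg
        rw [le_div_iff₀ habs, one_mul]
        exact abs_le.2 ⟨by linarith [hr.1], by linarith [hr.1]⟩
    · apply Real.rpow_nonneg
      rcases hr.1.eq_or_lt with h | h
      · simp [← h]
      · exact Real.log_nonneg (by rw [le_div_iff₀ h]; linarith [hr.2])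
  -- integrability of f on [0, 1/3]
  have hl3 : (1:ℝ) ≤ Real.log 3 := by
    rw [Real.le_log_iff_exp_le (by norm_num)]
    exact (Real.exp_one_lt_d9.le.trans (by norm_num))
  have hInt : IntervalIntegrable f volume 0 (1/3) := by
    have h1 : IntervalIntegrable (fun r => Real.log |r + x1|) volume 0 (1/3) := by
      have h := (intervalIntegrable_log_abs x1 (1/3 + x1)).comp_sub_right (-x1)
      simp only [sub_neg_eq_add] at h
      norm_num at h
      convert h using 2
      exact Real.log_abs _
    have h2 : IntervalIntegrable (fun r => Real.log |r - x1|) volume 0 (1/3) := by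
      have h := (intervalIntegrable_log_abs (-x1) (1/3 - x1)).comp_sub_right x1
      norm_num at h
      convert h using 2
      exact Real.log_abs _
    have hN := h1.sub h2
    have hmf : Measurable f := by
      apply Measurable.div
      · exact Real.measurable_log.comp
          ((measurable_id.add_const x1).div ((measurable_id.sub_const x1).abs))
      · exact (Real.continuous_rpow_const hα0.le).measurable.comp
          (Real.measurable_log.comp (measurable_const.div measurable_id))
    refine hN.mono_fun' hmf.aestronglyMeasurable ?_
    have hne_ae : ∀ᵐ r ∂(volume.restrict (Set.uIoc (0:ℝ) (1/3))), r ≠ x1 := by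
      refine ae_restrict_of_ae ?_
      rw [ae_iff]
      simp only [ne_eq, not_not, Set.setOf_eq_eq_singleton]
      exact measure_singleton x1
    filter_upwards [ae_restrict_mem measurableSet_uIoc, hne_ae] with r hr hrne
    rw [Set.uIoc_of_le (by norm_num : (0:ℝ) ≤ 1/3)] at hr
    obtain ⟨hr0, hr13⟩ := hr
    have habs : 0 < |r - x1| := abs_pos.2 (sub_ne_zero.2 hrne)
    have hrx1 : 0 < r + x1 := by linarith
    have hfr0 : 0 ≤ f r := hf_nonneg r ⟨hr0.le, hr13⟩
    have hden1 : 1 ≤ Real.log (1/r) ^ α := by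
      have hlr3 : Real.log 3 ≤ Real.log (1/r) :=
        Real.log_le_log (by norm_num) (by rw [le_div_iff₀ hr0]; linarith)
      calc (1:ℝ) = 1 ^ α := (Real.one_rpow α).symm
        _ ≤ Real.log (1/r) ^ α :=
            Real.rpow_le_rpow (by norm_num) (by linarith) hα0.le
    rw [Real.norm_eq_abs, abs_of_nonneg hfr0]
    calc f r ≤ Real.log ((r + x1) / |r - x1|) := by
          apply div_le_self ?_ hden1
          apply Real.log_nonneg
          rw [le_div_iff₀ habs, one_mul]
          exact abs_le.2 ⟨by linarith, by linarith⟩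
      _ = Real.log |r + x1| - Real.log |r - x1| := by
          rw [Real.log_div hrx1.ne' habs.ne', abs_of_pos hrx1]
  -- split the integral
  have hx13 : 2*x1 ≤ 1/3 := by linarith
  have hsub1 : Set.uIcc (0:ℝ) (2*x1) ⊆ Set.uIcc (0:ℝ) (1/3) := by
    rw [Set.uIcc_of_le (by linarith), Set.uIcc_of_le (by norm_num)]
    exact Set.Icc_subset_Icc le_rfl (by linarith)
  have hsub2 : Set.uIcc (2*x1) (1/3) ⊆ Set.uIcc (0:ℝ) (1/3) := by
    rw [Set.uIcc_of_le hx13, Set.uIcc_of_le (by norm_num)]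
    exact Set.Icc_subset_Icc (by linarith) le_rfl
  have hi1 := hInt.mono_set hsub1
  have hi2 := hInt.mono_set hsub2
  have hsplit := intervalIntegral.integral_add_adjacent_intervals hi1 hi2
  have h1nn : 0 ≤ ∫ r in (0:ℝ)..(2*x1), f r :=
    intervalIntegral.integral_nonneg (by linarith)
      (fun u hu => hf_nonneg u ⟨hu.1, by linarith [hu.2]⟩)
  -- pointwise lower bound on [2x1, 1/3]
  have hle : ∀ r ∈ Set.Icc (2*x1) (1/3), x1 * (r * Real.log (1/r) ^ α)⁻¹ ≤ f r := by
    intro r hr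
    have hr0 : 0 < r := lt_of_lt_of_le (by linarith) hr.1
    have hrx : x1 < r := by linarith [hr.1]
    have hz2 : 0 < r - x1 := by linarith
    have hz : 0 < r + x1 := by linarith
    have hlr : 0 < Real.log (1/r) :=
      Real.log_pos (by rw [lt_div_iff₀ hr0]; linarith [hr.2])
    have hD : 0 < Real.log (1/r) ^ α := Real.rpow_pos_of_pos hlr _
    have hkey : x1 / r ≤ Real.log ((r + x1) / (r - x1)) := by
      have h1 := Real.one_sub_inv_le_log_of_pos (show 0 < (r+x1)/(r-x1) by positivity)
      rw [inv_div] at h1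
      have heq : 1 - (r-x1)/(r+x1) = 2*x1/(r+x1) := by field_simp; ring
      have hcmp : x1/r ≤ 2*x1/(r+x1) := by
        rw [div_le_div_iff₀ hr0 hz]
        nlinarith
      linarith [heq ▸ h1]
    have hfr : f r = Real.log ((r + x1)/(r - x1)) / Real.log (1/r) ^ α := by
      rw [hf]
      simp only
      rw [abs_of_pos hz2]
    rw [hfr, show x1 * (r * Real.log (1/r) ^ α)⁻¹ = x1 / r / Real.log (1/r) ^ α by
      rw [div_div]; ring]
    exact div_le_div_of_nonneg_right hkey hD.le
  have hg_int : IntervalIntegrable (fun r : ℝ => x1 * (r * Real.log (1/r) ^ α)⁻¹)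
      volume (2*x1) (1/3) :=
    (inv_integrand_intervalIntegrable α (2*x1) (1/3) (by linarith) hx13 (by norm_num)).const_mul x1
  have hmono : (∫ r in (2*x1)..(1/3), x1 * (r * Real.log (1/r) ^ α)⁻¹)
      ≤ ∫ r in (2*x1)..(1/3), f r :=
    intervalIntegral.integral_mono_on hx13 hg_int hi2 hle
  have hval : (∫ r in (2*x1)..(1/3), x1 * (r * Real.log (1/r) ^ α)⁻¹)
      = x1 * ((Real.log (1/(2*x1)) ^ (1-α) - Real.log 3 ^ (1-α)) / (1-α)) := by
    rw [intervalIntegral.integral_const_mul,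
      ftc_piece α hα2 (2*x1) (1/3) (by linarith) hx13 (by norm_num)]
    norm_num
  -- arithmetic
  have hL : Real.log 36 ≤ Real.log (1/x1) :=
    Real.log_le_log (by norm_num) (by rw [le_div_iff₀ hx0]; linarith)
  have hlog2x1 : Real.log (1/(2*x1)) = Real.log (1/x1) - Real.log 2 := by
    rw [one_div, one_div, mul_inv,
      Real.log_mul (inv_ne_zero two_ne_zero) (inv_ne_zero hx0.ne'), Real.log_inv, Real.log_inv]
    ring
  have hkey2 := key_arith (1-α) (Real.log (1/x1)) ht0 hL
  rw [← hlog2x1] at hkey2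
  have hfinal : (1 - (2:ℝ)^(-(1-α))) * (2:ℝ)^(-(1-α)) / (1-α) * x1 * Real.log (1/x1) ^ (1-α)
      ≤ x1 * ((Real.log (1/(2*x1)) ^ (1-α) - Real.log 3 ^ (1-α)) / (1-α)) := by
    calc (1 - (2:ℝ)^(-(1-α))) * (2:ℝ)^(-(1-α)) / (1-α) * x1 * Real.log (1/x1) ^ (1-α)
        = (x1/(1-α)) * ((1 - (2:ℝ)^(-(1-α))) * (2:ℝ)^(-(1-α)) * Real.log (1/x1) ^ (1-α)) := by
          field_simp
      _ ≤ (x1/(1-α)) * (Real.log (1/(2*x1)) ^ (1-α) - Real.log 3 ^ (1-α)) :=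
          mul_le_mul_of_nonneg_left hkey2 (by positivity)
      _ = x1 * ((Real.log (1/(2*x1)) ^ (1-α) - Real.log 3 ^ (1-α)) / (1-α)) := by
          field_simp
  have hgoal : (∫ r in (0:ℝ)..(1/3), f r)
      = (∫ r in (0:ℝ)..(2*x1), f r) + ∫ r in (2*x1)..(1/3), f r := hsplit.symm
  calc (1 - (2:ℝ)^(-(1-α))) * (2:ℝ)^(-(1-α)) / (1-α) * x1 * Real.log (1/x1) ^ (1-α)
      ≤ x1 * ((Real.log (1/(2*x1)) ^ (1-α) - Real.log 3 ^ (1-α)) / (1-α)) := hfinal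
    _ ≤ ∫ r in (2*x1)..(1/3), f r := hval ▸ hmono
    _ ≤ (∫ r in (0:ℝ)..(2*x1), f r) + ∫ r in (2*x1)..(1/3), f r := by linarith
    _ = ∫ r in (0:ℝ)..(1/3), f r := hsplit
end

section
/- Fix 1/2 < α ≤ 2/3 and let 0 ≤ κ < α − 1/2. For n ∈ ℕ, n ≥ 2, define ω^n_+ on ℝ² by ω^n_+(x) = n/(log n)^α if x ∈ B⁺(0;1/n) and ω^n_+(x) = ω^α_+(x) otherwise. Then ω^n_+ → ω^α_+ in the Luxemburg norm of L²(log L)^κ, i.e. inf{ k > 0 : ∫_{ℝ²} A_{2,κ}(|ω^α_+(x) − ω^n_+(x)|/k) dx ≤ 1 } → 0 as n → ∞. -/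
open MeasureTheory Real Metric Filter
open scoped ENNReal Topology

/-- The truncation `ω^n_+`: equal to `n/(log n)^α` on `B⁺(0;1/n)` and to `ω^α_+`
elsewhere. -/
noncomputable def omegaN (α : ℝ) (n : ℕ) (x : E2) : ℝ :=
  if ‖x‖ < 1/(n:ℝ) ∧ 0 < x 1 then (n:ℝ) / Real.log n ^ α else omegaPlus α x

/-! ### Auxiliary definitions and lemmas -/

/-- Radial majorant of `omegaPlus`. -/
noncomputable def Fr (α : ℝ) (r : ℝ) : ℝ := if r < 1/3 then 1 / (r * |Real.log r| ^ α) else 0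

lemma one_lt_log_three : (1:ℝ) < Real.log 3 := by
  have h3 : Real.exp 1 < 3 := by
    have := Real.exp_one_lt_d9
    linarith
  calc (1:ℝ) = Real.log (Real.exp 1) := (Real.log_exp 1).symm
    _ < Real.log 3 := Real.log_lt_log (Real.exp_pos 1) h3

lemma exp_mul_rpow_anti {α s t : ℝ} (hα1 : α ≤ 1) (hs : 1 ≤ s) (hst : s ≤ t) :
    Real.exp (-t) * t ^ α ≤ Real.exp (-s) * s ^ α := by
  have hs0 : 0 < s := lt_of_lt_of_le one_pos hs
  have ht0 : 0 < t := lt_of_lt_of_le hs0 hst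
  have hts : 1 ≤ t / s := (one_le_div hs0).2 hst
  have h1 : t ^ α ≤ s ^ α * (t / s) := by
    have h2 : (t / s) ^ α ≤ t / s := by
      have := Real.rpow_le_rpow_of_exponent_le hts hα1
      rwa [Real.rpow_one] at this
    have h3 : t ^ α = s ^ α * (t / s) ^ α := by
      rw [← Real.mul_rpow hs0.le (by positivity)]
      congr 1
      field_simp
    rw [h3]
    exact mul_le_mul_of_nonneg_left h2 (Real.rpow_nonneg hs0.le α)
  have key : t ≤ s * Real.exp (t - s) := by
    nlinarith [Real.add_one_le_exp (t - s)]
  have h4 : Real.exp (-t) * (t / s) ≤ Real.exp (-s) := by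
    have h5 : Real.exp (-t) * t ≤ Real.exp (-s) * s := by
      calc Real.exp (-t) * t ≤ Real.exp (-t) * (s * Real.exp (t - s)) :=
            mul_le_mul_of_nonneg_left key (Real.exp_pos _).le
        _ = (Real.exp (-t) * Real.exp (t - s)) * s := by ring
        _ = Real.exp (-s) * s := by rw [← Real.exp_add]; ring_nf
    rw [← mul_div_assoc, div_le_iff₀ hs0]
    exact h5
  calc Real.exp (-t) * t ^ α ≤ Real.exp (-t) * (s ^ α * (t / s)) :=
        mul_le_mul_of_nonneg_left h1 (Real.exp_pos _).le
    _ = s ^ α * (Real.exp (-t) * (t / s)) := by ring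
    _ ≤ s ^ α * Real.exp (-s) := mul_le_mul_of_nonneg_left h4 (Real.rpow_nonneg hs0.le α)
    _ = Real.exp (-s) * s ^ α := by ring

lemma trunc_le {α : ℝ} (hα0 : 0 < α) (hα1 : α ≤ 1) {n : ℕ} (hn : 3 ≤ n) {r : ℝ}
    (hr0 : 0 < r) (hrn : r < 1/(n:ℝ)) :
    (n:ℝ) / Real.log n ^ α ≤ 1 / (r * |Real.log r| ^ α) := by
  have hn0 : (0:ℝ) < n := by positivity
  have hn3 : (3:ℝ) ≤ n := by exact_mod_cast hn
  have hs1 : 1 < Real.log n :=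
    lt_of_lt_of_le one_lt_log_three (Real.log_le_log (by norm_num) hn3)
  have hr1 : r < 1 := lt_of_lt_of_le hrn (by rw [div_le_one hn0]; linarith)
  have hlogr : Real.log r < 0 := Real.log_neg hr0 hr1
  have habs : |Real.log r| = -Real.log r := abs_of_neg hlogr
  have hst : Real.log n ≤ -Real.log r := by
    have h1 : Real.log r ≤ Real.log ((n:ℝ)⁻¹) :=
      Real.log_le_log hr0 (by rw [← one_div]; exact hrn.le)
    rw [Real.log_inv] at h1
    linarith
  have hA := exp_mul_rpow_anti hα1 hs1.le hst
  rw [neg_neg, Real.exp_log hr0, Real.exp_neg, Real.exp_log hn0] at hA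
  have ht0 : (0:ℝ) < -Real.log r := by linarith
  have hsα : (0:ℝ) < Real.log n ^ α := Real.rpow_pos_of_pos (by linarith) α
  have htα : (0:ℝ) < (-Real.log r) ^ α := Real.rpow_pos_of_pos ht0 α
  rw [habs, div_le_div_iff₀ hsα (by positivity)]
  have h2 := mul_le_mul_of_nonneg_left hA hn0.le
  have h3 : (n:ℝ) * ((n:ℝ)⁻¹ * Real.log n ^ α) = Real.log n ^ α := by
    field_simp
  rw [h3] at h2
  linarith

lemma Fr_nonneg (α : ℝ) {r : ℝ} (hr : 0 ≤ r) : 0 ≤ Fr α r := by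
  unfold Fr
  split
  · positivity
  · exact le_refl 0

lemma apa_zero (κ : ℝ) : Apa 2 κ 0 = 0 := by
  unfold Apa
  rw [zero_mul]
  exact Real.zero_rpow two_ne_zero

lemma apa_mono {κ : ℝ} (hκ0 : 0 ≤ κ) {a b : ℝ} (ha : 0 ≤ a) (hab : a ≤ b) :
    Apa 2 κ a ≤ Apa 2 κ b := by
  unfold Apa
  have hla : 0 ≤ Real.log (2 + a) := Real.log_nonneg (by linarith)
  have hlb : 0 ≤ Real.log (2 + b) := Real.log_nonneg (by linarith)
  have h1 : Real.log (2 + a) ^ κ ≤ Real.log (2 + b) ^ κ :=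
    Real.rpow_le_rpow hla (Real.log_le_log (by linarith) (by linarith)) hκ0
  exact Real.rpow_le_rpow (by positivity)
    (mul_le_mul hab h1 (Real.rpow_nonneg hla κ) (by linarith)) (by norm_num)

lemma diff_le {α : ℝ} (hα0 : 0 < α) (hα1 : α ≤ 1) {n : ℕ} (hn : 3 ≤ n) (x : E2) :
    |omegaPlus α x - omegaN α n x| ≤ Fr α ‖x‖ := by
  unfold omegaN
  by_cases h : ‖x‖ < 1/(n:ℝ) ∧ 0 < x 1
  · rw [if_pos h]
    have hx0 : x ≠ 0 := by
      intro hx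
      rw [hx] at h
      exact lt_irrefl 0 (by simpa using h.2)
    have hnorm : 0 < ‖x‖ := norm_pos_iff.2 hx0
    have hn3 : (3:ℝ) ≤ n := by exact_mod_cast hn
    have h13 : ‖x‖ < 1/3 := lt_of_lt_of_le h.1 (by
      apply one_div_le_one_div_of_le <;> linarith)
    have hop : omegaPlus α x = 1 / (‖x‖ * |Real.log ‖x‖| ^ α) := by
      unfold omegaPlus; rw [if_pos ⟨h13, h.2⟩]
    have hFr : Fr α ‖x‖ = 1 / (‖x‖ * |Real.log ‖x‖| ^ α) := by
      unfold Fr; rw [if_pos h13]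
    have hc := trunc_le hα0 hα1 hn hnorm h.1
    have hcn : (0:ℝ) ≤ (n:ℝ) / Real.log n ^ α :=
      div_nonneg (Nat.cast_nonneg n)
        (Real.rpow_nonneg (Real.log_nonneg (by exact_mod_cast by omega : (1:ℝ) ≤ n)) α)
    rw [hop, hFr, abs_of_nonneg (by linarith)]
    linarith
  · rw [if_neg h, sub_self, abs_zero]
    exact Fr_nonneg α (norm_nonneg x)

/-! ### Measurability -/

lemma measurableSet_cond (c : ℝ) : MeasurableSet {x : E2 | ‖x‖ < c ∧ 0 < x 1} :=
  (measurableSet_lt measurable_norm measurable_const).inter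
    (measurableSet_lt measurable_const ((measurable_pi_apply 1).comp (WithLp.measurable_ofLp 2 _)))

lemma measurable_omegaPlus (α : ℝ) : Measurable (omegaPlus α) := by
  unfold omegaPlus
  exact Measurable.ite (measurableSet_cond (1/3))
    (measurable_const.div (measurable_norm.mul
      ((measurable_norm.log.abs).pow measurable_const))) measurable_const

lemma measurable_omegaN (α : ℝ) (n : ℕ) : Measurable (omegaN α n) := by
  unfold omegaN
  exact Measurable.ite (measurableSet_cond (1/(n:ℝ))) measurable_const (measurable_omegaPlus α)

lemma measurable_apa (κ : ℝ) : Measurable (fun s : ℝ => Apa 2 κ s) := by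
  unfold Apa
  exact (measurable_id.mul
    (((measurable_const.add measurable_id).log).pow measurable_const)).pow measurable_const

lemma measurable_Fr (α : ℝ) : Measurable (Fr α) := by
  unfold Fr
  exact Measurable.ite measurableSet_Iio
    (measurable_const.div (measurable_id.mul
      ((measurable_id.log.abs).pow measurable_const))) measurable_const

/-! ### Radial integration -/

lemma lintegral_norm_E2 (g : ℝ → ℝ≥0∞) (hg : Measurable g) :
    ∫⁻ x : E2, g ‖x‖ =
      (volume : Measure E2).toSphere Set.univ *
        ∫⁻ r in Set.Ioi (0:ℝ), ENNReal.ofReal r * g r := by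
  have hgm : Measurable (fun z : sphere (0:E2) 1 × Set.Ioi (0:ℝ) => g z.2) :=
    hg.comp (measurable_subtype_coe.comp measurable_snd)
  have hdim : Module.finrank ℝ E2 - 1 = 1 := by
    rw [finrank_euclideanSpace_fin]
  calc ∫⁻ x : E2, g ‖x‖
      = ∫⁻ x : ({(0:E2)}ᶜ : Set E2), g ‖(x : E2)‖ ∂((volume : Measure E2).comap Subtype.val) := by
        rw [lintegral_subtype_comap (measurableSet_singleton (0:E2)).compl (fun y : E2 => g ‖y‖),
          restrict_compl_singleton]
    _ = ∫⁻ z : sphere (0:E2) 1 × Set.Ioi (0:ℝ), g z.2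
          ∂((volume : Measure E2).toSphere.prod (Measure.volumeIoiPow (Module.finrank ℝ E2 - 1))) :=
        by have h := (volume : Measure E2).measurePreserving_homeomorphUnitSphereProd.lintegral_comp hgm
           simpa [homeomorphUnitSphereProd] using h
    _ = ∫⁻ _ : sphere (0:E2) 1, (∫⁻ r : Set.Ioi (0:ℝ), g r
          ∂(Measure.volumeIoiPow (Module.finrank ℝ E2 - 1))) ∂(volume : Measure E2).toSphere :=
        lintegral_prod _ hgm.aemeasurable
    _ = (volume : Measure E2).toSphere Set.univ * ∫⁻ r : Set.Ioi (0:ℝ), g r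
          ∂(Measure.volumeIoiPow (Module.finrank ℝ E2 - 1)) := by
        rw [lintegral_const, mul_comm]
    _ = (volume : Measure E2).toSphere Set.univ *
          ∫⁻ r in Set.Ioi (0:ℝ), ENNReal.ofReal r * g r := by
        congr 1
        rw [hdim, Measure.volumeIoiPow,
          lintegral_withDensity_eq_lintegral_mul _
            ((measurable_subtype_coe.pow_const 1).ennreal_ofReal)
            (show Measurable (fun r : Set.Ioi (0:ℝ) => g ↑r) from hg.comp measurable_subtype_coe)]
        simp only [Pi.mul_apply, pow_one]
        exact lintegral_subtype_comap measurableSet_Ioi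
          (fun r : ℝ => ENNReal.ofReal r * g r)

/-! ### The key integrability estimates -/

lemma image_exp_neg : (fun t => Real.exp (-t)) '' Set.Ioi (Real.log 3) = Set.Ioo 0 (1/3) := by
  have h13 : Real.log (1/3) = -Real.log 3 := by rw [one_div, Real.log_inv]
  ext y
  simp only [Set.mem_image, Set.mem_Ioi, Set.mem_Ioo]
  constructor
  · rintro ⟨t, ht, rfl⟩
    refine ⟨Real.exp_pos _, ?_⟩
    rw [show (1:ℝ)/3 = Real.exp (-(Real.log 3)) by
      rw [Real.exp_neg, Real.exp_log (by norm_num : (0:ℝ) < 3)]; norm_num]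
    exact Real.exp_lt_exp.2 (by linarith)
  · rintro ⟨hy0, hy3⟩
    refine ⟨-Real.log y, ?_, by rw [neg_neg, Real.exp_log hy0]⟩
    have := Real.log_lt_log hy0 hy3
    rw [h13] at this
    linarith

lemma apa_bound {α κ k r : ℝ} (hκ0 : 0 ≤ κ) (hk : 0 < k) (hα0 : 0 < α)
    (hr0 : 0 < r) (hr3 : r < 1/3) :
    Apa 2 κ (Fr α r / k) ≤
      ((1/(r * (-Real.log r)^α * k)) * ((Real.log (2+1/k)+1) * (-Real.log r))^κ)^2 := by
  set C₁ := Real.log (2+1/k) + 1 with hC₁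
  have hC₁0 : 0 ≤ Real.log (2+1/k) := Real.log_nonneg (by
    have : 0 < 1/k := by positivity
    linarith)
  have hlogr : Real.log r < 0 := Real.log_neg hr0 (by linarith)
  set L := -Real.log r with hL
  have hL1 : 1 < L := by
    have h1 : Real.log r < Real.log (1/3) := Real.log_lt_log hr0 hr3
    have h2 : Real.log (1/3) = -Real.log 3 := by rw [one_div, Real.log_inv]
    have := one_lt_log_three
    rw [hL]; rw [h2] at h1; linarith
  have hL0 : 0 < L := by linarith
  have hLα : (0:ℝ) < L ^ α := Real.rpow_pos_of_pos hL0 α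
  have hLα1 : (1:ℝ) ≤ L ^ α := Real.one_le_rpow hL1.le hα0.le
  have hFr : Fr α r = 1 / (r * L ^ α) := by
    unfold Fr
    rw [if_pos hr3, abs_of_neg hlogr]
  have hs₀ : Fr α r / k = 1 / (r * L ^ α * k) := by
    rw [hFr, div_div]
  have hs₀0 : 0 ≤ 1 / (r * L ^ α * k) := by positivity
  have hle2 : 2 + 1 / (r * L ^ α * k) ≤ (2 + 1/k) / r := by
    have hle1 : 1 / (r * L ^ α * k) ≤ 1 / (r * k) := by
      apply one_div_le_one_div_of_le (by positivity)
      calc r * k = r * 1 * k := by ring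
        _ ≤ r * L ^ α * k := by
            apply mul_le_mul_of_nonneg_right _ hk.le
            exact mul_le_mul_of_nonneg_left hLα1 hr0.le
    have e : (2 + 1/k)/r = 2/r + 1/(r*k) := by
      field_simp
    have h2r : (2:ℝ) ≤ 2/r := by
      rw [le_div_iff₀ hr0]; nlinarith
    rw [e]; linarith
  have hlog : Real.log (2 + 1 / (r * L ^ α * k)) ≤ C₁ * L := by
    have hpos : (0:ℝ) < 2 + 1 / (r * L ^ α * k) := by positivity
    calc Real.log (2 + 1 / (r * L ^ α * k)) ≤ Real.log ((2 + 1/k)/r) :=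
          Real.log_le_log hpos hle2
      _ = Real.log (2 + 1/k) - Real.log r := Real.log_div (by positivity) hr0.ne'
      _ = Real.log (2 + 1/k) + L := by rw [hL]; ring
      _ ≤ C₁ * L := by rw [hC₁]; nlinarith
  have hloge : 0 ≤ Real.log (2 + 1 / (r * L ^ α * k)) := Real.log_nonneg (by
    have : 0 ≤ 1 / (r * L ^ α * k) := hs₀0
    linarith)
  have hrpow : Real.log (2 + 1 / (r * L ^ α * k)) ^ κ ≤ (C₁ * L) ^ κ :=
    Real.rpow_le_rpow hloge hlog hκ0
  have hinner : (1 / (r * L ^ α * k)) * Real.log (2 + 1 / (r * L ^ α * k)) ^ κ ≤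
      (1 / (r * L ^ α * k)) * (C₁ * L) ^ κ :=
    mul_le_mul_of_nonneg_left hrpow hs₀0
  have hinner0 : 0 ≤ (1 / (r * L ^ α * k)) * Real.log (2 + 1 / (r * L ^ α * k)) ^ κ :=
    mul_nonneg hs₀0 (Real.rpow_nonneg hloge κ)
  unfold Apa
  rw [hs₀, show (2:ℝ) = ((2:ℕ):ℝ) by norm_num, Real.rpow_natCast]
  exact pow_le_pow_left₀ hinner0 hinner 2

lemma g0_integrable {α κ k : ℝ} (hk : 0 < k) (hκα : κ < α - 1/2) :
    IntegrableOn (fun r : ℝ =>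
      ((1/(r * (-Real.log r)^α * k)) * ((Real.log (2+1/k)+1) * (-Real.log r))^κ)^2 * r)
      (Set.Ioo 0 (1/3)) := by
  set C₁ := Real.log (2+1/k) + 1 with hC₁
  have hC₁0 : 0 < C₁ := by
    have : 0 ≤ Real.log (2+1/k) := Real.log_nonneg (by
      have : 0 < 1/k := by positivity
      linarith)
    rw [hC₁]; linarith
  have hlog3 : 0 < Real.log 3 := by linarith [one_lt_log_three]
  rw [← image_exp_neg]
  have hderiv : ∀ t ∈ Set.Ioi (Real.log 3),
      HasDerivWithinAt (fun t => Real.exp (-t)) (-Real.exp (-t)) (Set.Ioi (Real.log 3)) t := by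
    intro t _
    have h := ((Real.hasDerivAt_exp (-t)).comp t (hasDerivAt_neg t))
    simpa [mul_comm, Function.comp_def] using h.hasDerivWithinAt
  have hinj : Set.InjOn (fun t => Real.exp (-t)) (Set.Ioi (Real.log 3)) := by
    intro a _ b _ h
    have := Real.exp_injective h
    linarith
  rw [integrableOn_image_iff_integrableOn_abs_deriv_smul measurableSet_Ioi hderiv hinj]
  have hint : IntegrableOn (fun t : ℝ => ((1/k) * C₁^κ)^2 * t ^ (2*κ - 2*α))
      (Set.Ioi (Real.log 3)) :=
    (integrableOn_Ioi_rpow_of_lt (by linarith) hlog3).const_mul _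
  apply hint.congr_fun _ measurableSet_Ioi
  intro t ht
  have ht0 : 0 < t := lt_trans hlog3 ht
  have hE : 0 < Real.exp (-t) := Real.exp_pos _
  have htα : (0:ℝ) < t ^ α := Real.rpow_pos_of_pos ht0 α
  have htκ : (0:ℝ) < t ^ κ := Real.rpow_pos_of_pos ht0 κ
  simp only [smul_eq_mul, abs_neg, abs_of_pos hE, Real.log_exp, neg_neg]
  rw [Real.mul_rpow hC₁0.le ht0.le,
    show 2*κ - 2*α = (κ-α)+(κ-α) by ring, Real.rpow_add ht0, Real.rpow_sub ht0]
  field_simp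

lemma bound_finite {α κ k : ℝ} (hκ0 : 0 ≤ κ) (hk : 0 < k) (hα0 : 0 < α) (hκα : κ < α - 1/2) :
    ∫⁻ x : E2, ENNReal.ofReal (Apa 2 κ (Fr α ‖x‖ / k)) ≠ ∞ := by
  have hg : Measurable (fun r : ℝ => ENNReal.ofReal (Apa 2 κ (Fr α r / k))) :=
    ((measurable_apa κ).comp ((measurable_Fr α).div_const k)).ennreal_ofReal
  rw [lintegral_norm_E2 _ hg]
  apply ENNReal.mul_ne_top (measure_ne_top _ _)
  set g₀ : ℝ → ℝ := fun r =>
    ((1/(r * (-Real.log r)^α * k)) * ((Real.log (2+1/k)+1) * (-Real.log r))^κ)^2 * r with hg₀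
  have hmono : ∫⁻ r in Set.Ioi (0:ℝ), ENNReal.ofReal r * ENNReal.ofReal (Apa 2 κ (Fr α r / k))
      ≤ ∫⁻ r in Set.Ioi (0:ℝ),
          (Set.Ioo (0:ℝ) (1/3)).indicator (fun r => ENNReal.ofReal (g₀ r)) r := by
    apply lintegral_mono_ae
    filter_upwards [ae_restrict_mem measurableSet_Ioi] with r hr
    rcases lt_or_ge r (1/3) with h3 | h3
    · have hmem : r ∈ Set.Ioo (0:ℝ) (1/3) := ⟨hr, h3⟩
      rw [Set.indicator_of_mem hmem, ← ENNReal.ofReal_mul (le_of_lt hr)]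
      apply ENNReal.ofReal_le_ofReal
      rw [hg₀]
      calc r * Apa 2 κ (Fr α r / k)
          ≤ r * (((1/(r * (-Real.log r)^α * k)) *
              ((Real.log (2+1/k)+1) * (-Real.log r))^κ)^2) :=
            mul_le_mul_of_nonneg_left (apa_bound hκ0 hk hα0 hr h3) (le_of_lt hr)
        _ = _ := by ring
    · have hFr : Fr α r = 0 := by unfold Fr; rw [if_neg (not_lt.2 h3)]
      rw [hFr, zero_div, apa_zero, ENNReal.ofReal_zero, mul_zero]
      exact zero_le
  have hind : ∫⁻ r in Set.Ioi (0:ℝ),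
      (Set.Ioo (0:ℝ) (1/3)).indicator (fun r => ENNReal.ofReal (g₀ r)) r
      = ∫⁻ r in Set.Ioo (0:ℝ) (1/3), ENNReal.ofReal (g₀ r) := by
    rw [lintegral_indicator measurableSet_Ioo, Measure.restrict_restrict measurableSet_Ioo,
      Set.inter_eq_self_of_subset_left Set.Ioo_subset_Ioi_self]
  have hfin : ∫⁻ r in Set.Ioo (0:ℝ) (1/3), ENNReal.ofReal (g₀ r) < ∞ :=
    (g0_integrable hk hκα).lintegral_lt_top
  exact ne_of_lt (lt_of_le_of_lt hmono (hind ▸ hfin))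

/-! ### The main theorem -/

/-- for `1/2 < α ≤ 2/3` and `0 ≤ κ < α - 1/2`, the truncations `ω^n_+`
converge to `ω^α_+` in the Luxemburg norm of the Zygmund space `L²(log L)^κ`. -/
theorem truncation_converges_in_Zygmund (α κ : ℝ) (hα1 : 1/2 < α) (hα2 : α ≤ 2/3)
    (hκ0 : 0 ≤ κ) (hκ : κ < α - 1/2) :
    Tendsto (fun n : ℕ =>
        sInf {k : ℝ | 0 < k ∧
          ∫⁻ x, ENNReal.ofReal (Apa 2 κ (|omegaPlus α x - omegaN α n x| / k)) ≤ 1})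
      atTop (𝓝 0) := by
  have hα0 : 0 < α := by linarith
  have hαle1 : α ≤ 1 := by linarith
  -- Step 1: for each fixed k > 0, the integrals tend to 0.
  have main : ∀ k : ℝ, 0 < k →
      Tendsto (fun n : ℕ =>
        ∫⁻ x, ENNReal.ofReal (Apa 2 κ (|omegaPlus α x - omegaN α n x| / k)))
      atTop (𝓝 0) := by
    intro k hk
    rw [← Filter.tendsto_add_atTop_iff_nat 3]
    have hmeas : ∀ n : ℕ, Measurable (fun x : E2 =>
        ENNReal.ofReal (Apa 2 κ (|omegaPlus α x - omegaN α (n+3) x| / k))) := by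
      intro n
      exact ((measurable_apa κ).comp
        ((((measurable_omegaPlus α).sub (measurable_omegaN α (n+3))).abs).div_const k)
        ).ennreal_ofReal
    have hbd : ∀ n : ℕ, (fun x : E2 =>
        ENNReal.ofReal (Apa 2 κ (|omegaPlus α x - omegaN α (n+3) x| / k)))
        ≤ᵐ[volume] (fun x : E2 => ENNReal.ofReal (Apa 2 κ (Fr α ‖x‖ / k))) := by
      intro n
      filter_upwards with x
      apply ENNReal.ofReal_le_ofReal
      apply apa_mono hκ0 (div_nonneg (abs_nonneg _) hk.le)
      exact div_le_div_of_nonneg_right (diff_le hα0 hαle1 (by omega) x) hk.le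
    have hlim : ∀ᵐ x : E2 ∂volume, Tendsto (fun n : ℕ =>
        ENNReal.ofReal (Apa 2 κ (|omegaPlus α x - omegaN α (n+3) x| / k)))
        atTop (𝓝 ((fun _ : E2 => (0:ℝ≥0∞)) x)) := by
      have h0 : ∀ᵐ x : E2 ∂volume, x ≠ 0 := compl_mem_ae_iff.2 (measure_singleton 0)
      filter_upwards [h0] with x hx
      have hx0 : 0 < ‖x‖ := norm_pos_iff.2 hx
      have hev : ∀ᶠ n : ℕ in atTop,
          ENNReal.ofReal (Apa 2 κ (|omegaPlus α x - omegaN α (n+3) x| / k)) = 0 := by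
        obtain ⟨N, hN⟩ := exists_nat_gt (1/‖x‖)
        filter_upwards [eventually_ge_atTop N] with n hn
        have hcast : ((n+3:ℕ):ℝ) = (n:ℝ) + 3 := by push_cast; ring
        have hlt : 1/((n:ℝ)+3) < ‖x‖ := by
          have h1 : 1/‖x‖ < (n:ℝ)+3 := by
            have : (N:ℝ) ≤ (n:ℝ) := by exact_mod_cast hn
            linarith
          rw [div_lt_iff₀ (by positivity)]
          rw [div_lt_iff₀ hx0] at h1
          nlinarith
        have hN : omegaN α (n+3) x = omegaPlus α x := by
          unfold omegaN
          rw [if_neg]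
          rintro ⟨h1, -⟩
          rw [hcast] at h1
          exact absurd h1 (not_lt.2 hlt.le)
        rw [hN, sub_self, abs_zero, zero_div, apa_zero, ENNReal.ofReal_zero]
      exact Tendsto.congr' (hev.mono fun n h => h.symm) tendsto_const_nhds
    have := tendsto_lintegral_of_dominated_convergence
      (μ := (volume : Measure E2))
      (bound := fun x : E2 => ENNReal.ofReal (Apa 2 κ (Fr α ‖x‖ / k)))
      hmeas hbd (bound_finite hκ0 hk hα0 hκ) hlim
    simpa using this
  -- Step 2: conclude convergence of the Luxemburg norms.
  refine tendsto_order.2 ⟨fun a ha => ?_, fun a ha => ?_⟩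
  · filter_upwards with n
    have h0 : (0:ℝ) ≤ sInf {k : ℝ | 0 < k ∧
        ∫⁻ x, ENNReal.ofReal (Apa 2 κ (|omegaPlus α x - omegaN α n x| / k)) ≤ 1} :=
      Real.sInf_nonneg (fun x hx => hx.1.le)
    linarith
  · have hk := main (a/2) (by linarith)
    have hev : ∀ᶠ n : ℕ in atTop,
        ∫⁻ x, ENNReal.ofReal (Apa 2 κ (|omegaPlus α x - omegaN α n x| / (a/2))) ≤ 1 := by
      filter_upwards [hk.eventually_lt_const (by norm_num : (0:ℝ≥0∞) < 1)] with n hn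
      exact hn.le
    filter_upwards [hev] with n hn
    have hmem : a/2 ∈ {k : ℝ | 0 < k ∧
        ∫⁻ x, ENNReal.ofReal (Apa 2 κ (|omegaPlus α x - omegaN α n x| / k)) ≤ 1} :=
      ⟨by linarith, hn⟩
    have hbdd : BddBelow {k : ℝ | 0 < k ∧
        ∫⁻ x, ENNReal.ofReal (Apa 2 κ (|omegaPlus α x - omegaN α n x| / k)) ≤ 1} :=
      ⟨0, fun x hx => hx.1.le⟩
    have := csInf_le hbdd hmem
    linarith
end
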